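/- Nilpotent exponential subspaces of the transfer operator: let N ≥ 1 and m ≥ 0 be integers, let β = (2m+1)^{1/N} be the positive real N-th root of the odd integer 2m+1, let l be an integer and z a complex number. Define φ : ℝ → ℂ by φ(x) = Σ_{n=0}^{N} z^n · exp(2πi(2l+1)β^n x). Then the N-fold application of P_β annihilates φ: (P_β)^N φ = 0 identically. -/

import Mathlib

open Complex Finset

private lemma odd_exp (j : ℤ) :
    Complex.exp ((Real.pi : ℂ) * Complex.I * (2 * j + 1)) = -1 := by
  have h : (Real.pi : ℂ) * Complex.I * (2 * j + 1)
      = (j : ℂ) * (2 * (Real.pi : ℂ) * Complex.I) + (Real.pi : ℂ) * Complex.I := by ring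
  rw [h, Complex.exp_add, Complex.exp_int_mul_two_pi_mul_I, one_mul, Complex.exp_pi_mul_I]

private lemma step_lemma (β : ℝ) (hβ : 0 < β) (μ : ℂ)
    (hμ : Complex.exp ((Real.pi : ℂ) * Complex.I * μ) = -1) (k : ℕ) (a : ℕ → ℂ) :
    (fun y : ℝ => (1/(β : ℂ)) *
      ((fun x : ℝ => ∑ n ∈ Finset.range (k+1), a n *
        Complex.exp (2 * (Real.pi : ℂ) * Complex.I * μ * (β : ℂ) ^ n * (x : ℂ))) (y/β)
      + (fun x : ℝ => ∑ n ∈ Finset.range (k+1), a n *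
        Complex.exp (2 * (Real.pi : ℂ) * Complex.I * μ * (β : ℂ) ^ n * (x : ℂ))) (y/β + 1/2)))
    = fun x : ℝ => ∑ n ∈ Finset.range k,
        (a (n+1) * ((1/(β : ℂ)) * (1 + Complex.exp ((Real.pi : ℂ) * Complex.I * μ * (β : ℂ) ^ (n+1))))) *
        Complex.exp (2 * (Real.pi : ℂ) * Complex.I * μ * (β : ℂ) ^ n * (x : ℂ)) := by
  have hb : (β : ℂ) ≠ 0 := by exact_mod_cast hβ.ne'
  funext y
  simp only
  rw [← Finset.sum_add_distrib, Finset.mul_sum, Finset.sum_range_succ']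
  have h0 : (1/(β : ℂ)) * (a 0 *
        Complex.exp (2 * (Real.pi : ℂ) * Complex.I * μ * (β : ℂ) ^ 0 * ((y/β : ℝ) : ℂ)) +
      a 0 * Complex.exp (2 * (Real.pi : ℂ) * Complex.I * μ * (β : ℂ) ^ 0 * ((y/β + 1/2 : ℝ) : ℂ))) = 0 := by
    have h1 : Complex.exp (2 * (Real.pi : ℂ) * Complex.I * μ * (β : ℂ) ^ 0 * ((y/β + 1/2 : ℝ) : ℂ))
        = Complex.exp (2 * (Real.pi : ℂ) * Complex.I * μ * (β : ℂ) ^ 0 * ((y/β : ℝ) : ℂ)) *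
          Complex.exp ((Real.pi : ℂ) * Complex.I * μ) := by
      rw [← Complex.exp_add]; congr 1; push_cast; ring
    rw [h1, hμ]; ring
  rw [h0, add_zero]
  refine Finset.sum_congr rfl fun n _ => ?_
  have h1 : Complex.exp (2 * (Real.pi : ℂ) * Complex.I * μ * (β : ℂ) ^ (n+1) * ((y/β + 1/2 : ℝ) : ℂ))
      = Complex.exp (2 * (Real.pi : ℂ) * Complex.I * μ * (β : ℂ) ^ (n+1) * ((y/β : ℝ) : ℂ)) *
        Complex.exp ((Real.pi : ℂ) * Complex.I * μ * (β : ℂ) ^ (n+1)) := by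
    rw [← Complex.exp_add]; congr 1; push_cast; ring
  have h2 : Complex.exp (2 * (Real.pi : ℂ) * Complex.I * μ * (β : ℂ) ^ (n+1) * ((y/β : ℝ) : ℂ))
      = Complex.exp (2 * (Real.pi : ℂ) * Complex.I * μ * (β : ℂ) ^ n * (y : ℂ)) := by
    congr 1; push_cast; field_simp; ring
  rw [h1, h2]; ring

private lemma aux_lemma (β : ℝ) (hβ : 0 < β) (μ : ℂ)
    (hμ : Complex.exp ((Real.pi : ℂ) * Complex.I * μ) = -1) :
    ∀ (k : ℕ) (a : ℕ → ℂ),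
    (fun f : ℝ → ℂ => fun y : ℝ => (1/(β : ℂ)) * (f (y/β) + f (y/β + 1/2)))^[k]
      (fun x : ℝ => ∑ n ∈ Finset.range k, a n *
        Complex.exp (2 * (Real.pi : ℂ) * Complex.I * μ * (β : ℂ) ^ n * (x : ℂ)))
      = fun _ => 0 := by
  intro k
  induction k with
  | zero => intro a; funext x; simp
  | succ k ih =>
    intro a
    rw [Function.iterate_succ_apply, step_lemma β hβ μ hμ k a]
    exact ih _

theorem nilpotent_coherent_states (N : ℕ) (hN : 1 ≤ N) (m : ℕ) (β : ℝ) (hβpos : 0 < β)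
    (hβ : β ^ N = 2 * (m : ℝ) + 1) (l : ℤ) (z : ℂ) (φ : ℝ → ℂ)
    (hφ : ∀ x : ℝ, φ x = ∑ n ∈ Finset.range (N+1),
        z ^ n * Complex.exp (2 * (Real.pi : ℂ) * Complex.I *
          ((2 * l + 1 : ℤ) : ℂ) * (β : ℂ) ^ n * (x : ℂ))) :
    (fun f : ℝ → ℂ => fun y : ℝ => (1/(β : ℂ)) * (f (y/β) + f (y/β + 1/2)))^[N] φ
      = fun _ => 0 := by
  set μ : ℂ := ((2 * l + 1 : ℤ) : ℂ) with hμdef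
  have hμ : Complex.exp ((Real.pi : ℂ) * Complex.I * μ) = -1 := by
    have := odd_exp l
    convert this using 2
    push_cast [hμdef]; ring
  have hφ' : φ = fun x : ℝ => ∑ n ∈ Finset.range (N+1),
      z ^ n * Complex.exp (2 * (Real.pi : ℂ) * Complex.I * μ * (β : ℂ) ^ n * (x : ℂ)) :=
    funext hφ
  obtain ⟨K, rfl⟩ : ∃ K, N = K + 1 := ⟨N - 1, (Nat.succ_pred_eq_of_pos hN).symm⟩
  rw [hφ', Function.iterate_succ_apply,
    step_lemma β hβpos μ hμ (K+1) (fun n => z ^ n)]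
  -- now the sum over range (K+1) has its top coefficient zero
  have hβC : (β : ℂ) ^ (K + 1) = 2 * (m : ℂ) + 1 := by
    rw [← Complex.ofReal_pow, hβ]; push_cast; ring
  have htop : Complex.exp ((Real.pi : ℂ) * Complex.I * μ * (β : ℂ) ^ (K + 1)) = -1 := by
    rw [hβC]
    have := odd_exp (2 * l * m + l + m)
    convert this using 2
    push_cast [hμdef]; ring
  have hzero : (fun x : ℝ => ∑ n ∈ Finset.range (K+1),
      ((fun n => z ^ n) (n+1) * ((1/(β : ℂ)) * (1 + Complex.exp ((Real.pi : ℂ) * Complex.I * μ * (β : ℂ) ^ (n+1))))) *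
      Complex.exp (2 * (Real.pi : ℂ) * Complex.I * μ * (β : ℂ) ^ n * (x : ℂ)))
      = fun x : ℝ => ∑ n ∈ Finset.range K,
      ((fun n => z ^ n) (n+1) * ((1/(β : ℂ)) * (1 + Complex.exp ((Real.pi : ℂ) * Complex.I * μ * (β : ℂ) ^ (n+1))))) *
      Complex.exp (2 * (Real.pi : ℂ) * Complex.I * μ * (β : ℂ) ^ n * (x : ℂ)) := by
    funext x
    rw [Finset.sum_range_succ, htop]
    simp
  rw [hzero]
  exact aux_lemma β hβpos μ hμ K _
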